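/- If β and γ are real numbers with β + γ = 2π/3 and 0 < β < π/3, then 2·cos(β) + cos(γ) > 1. -/
import Mathlib

lemma sin_gt_aux {x : ℝ} (h1 : Real.pi / 3 < x) (h2 : x < 2 * Real.pi / 3) :
    Real.sin x > Real.sqrt 3 / 2 := by
  have hpi := Real.pi_pos
  rw [← Real.sin_pi_div_three]
  rcases le_or_gt x (Real.pi / 2) with h | h
  · exact Real.strictMonoOn_sin ⟨by linarith, by linarith⟩ ⟨by linarith, h⟩ h1
  · rw [← Real.sin_pi_sub x]
    exact Real.strictMonoOn_sin ⟨by linarith, by linarith⟩ ⟨by linarith, by linarith⟩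
      (by linarith)

theorem stmt1 (β γ : ℝ) (hsum : β + γ = 2 * Real.pi / 3)
    (hβ0 : 0 < β) (hβ : β < Real.pi / 3) :
    2 * Real.cos β + Real.cos γ > 1 := by
  have hpi := Real.pi_pos
  have hγ : γ = 2 * Real.pi / 3 - β := by linarith
  have hs : Real.sin (β + Real.pi / 3) > Real.sqrt 3 / 2 :=
    sin_gt_aux (by linarith) (by linarith)
  have hadd : Real.sin (β + Real.pi / 3)
      = Real.sin β * (1/2) + Real.cos β * (Real.sqrt 3 / 2) := by
    rw [Real.sin_add, Real.cos_pi_div_three, Real.sin_pi_div_three]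
  have hcos : Real.cos γ = -(1/2) * Real.cos β + (Real.sqrt 3 / 2) * Real.sin β := by
    rw [hγ, show 2 * Real.pi / 3 - β = Real.pi - (Real.pi / 3 + β) by ring,
      Real.cos_pi_sub, Real.cos_add, Real.cos_pi_div_three, Real.sin_pi_div_three]
    ring
  have h3 : Real.sqrt 3 ^ 2 = 3 := Real.sq_sqrt (by norm_num)
  have h3pos : (1:ℝ) < Real.sqrt 3 := by
    nlinarith [Real.sqrt_nonneg 3]
  have key : Real.sqrt 3 * Real.sin (β + Real.pi / 3)
      > Real.sqrt 3 * (Real.sqrt 3 / 2) :=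
    mul_lt_mul_of_pos_left hs (by linarith)
  rw [hadd] at key
  have e : Real.sqrt 3 * (Real.sin β * (1 / 2) + Real.cos β * (Real.sqrt 3 / 2))
      = Real.sqrt 3 * Real.sin β / 2 + 3 * Real.cos β / 2 := by
    linear_combination (Real.cos β / 2) * h3
  have e2 : Real.sqrt 3 * (Real.sqrt 3 / 2) = 3 / 2 := by
    linear_combination (1 / 2 : ℝ) * h3
  rw [e, e2] at key
  linarith [key, hcos.ge, hcos.le]
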